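/- Work in the ℝ-module F := Fin 2 → MvPolynomial (Fin 2 × Fin 2) ℝ. Let 𝕄 be the 2×2 matrix over MvPolynomial (Fin 2 × Fin 2) ℝ whose (i, j) entry is the variable X (i, j). For V : Fin 2 → ℝ and A a real 2×2 matrix, let f(V, A) ∈ F be the row vector Matrix.vecMul (fun i => C (V i)) (𝕄 * 𝕄ᵀ * (A.map C) * 𝕄), where C : ℝ → MvPolynomial (Fin 2 × Fin 2) ℝ is the constant embedding. Then the ℝ-submodule of F spanned by the set { f(V, A) | V : Fin 2 → ℝ, A : Matrix (Fin 2) (Fin 2) ℝ } has finite rank equal to 6. -/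

import Mathlib

open Matrix MvPolynomial

/-- The generic `2×2` matrix whose entries are the variables `X (i, j)`. -/
noncomputable def genMat : Matrix (Fin 2) (Fin 2) (MvPolynomial (Fin 2 × Fin 2) ℝ) :=
  Matrix.of fun i j => X (i, j)

/-- The polynomial function computed by the lightning self-attention mechanism with
parameters `V` and `A` (architecture `e' = 1`, `e = t = a = 2`), viewed as a pair of
cubic polynomials in the four entries of the input matrix. -/
noncomputable def attentionFun (V : Fin 2 → ℝ) (A : Matrix (Fin 2) (Fin 2) ℝ) :
    Fin 2 → MvPolynomial (Fin 2 × Fin 2) ℝ :=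
  Matrix.vecMul (fun i => C (V i)) (genMat * genMatᵀ * (A.map C) * genMat)

noncomputable def Qf : Fin 3 → MvPolynomial (Fin 2 × Fin 2) ℝ :=
  ![X (0,0) * X (0,0) + X (0,1) * X (0,1),
    X (0,0) * X (1,0) + X (0,1) * X (1,1),
    X (1,0) * X (1,0) + X (1,1) * X (1,1)]

noncomputable def wv : Fin 6 → (Fin 2 → MvPolynomial (Fin 2 × Fin 2) ℝ) :=
  ![fun j => Qf 0 * X (0, j), fun j => Qf 0 * X (1, j),
    fun j => Qf 1 * X (0, j), fun j => Qf 1 * X (1, j),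
    fun j => Qf 2 * X (0, j), fun j => Qf 2 * X (1, j)]

@[simp] lemma Qf_0 : Qf 0 = X (0,0) * X (0,0) + X (0,1) * X (0,1) := rfl
@[simp] lemma Qf_1 : Qf 1 = X (0,0) * X (1,0) + X (0,1) * X (1,1) := rfl
@[simp] lemma Qf_2 : Qf 2 = X (1,0) * X (1,0) + X (1,1) * X (1,1) := rfl
@[simp] lemma wv_0 : wv 0 = fun j => Qf 0 * X (0, j) := rfl
@[simp] lemma wv_1 : wv 1 = fun j => Qf 0 * X (1, j) := rfl
@[simp] lemma wv_2 : wv 2 = fun j => Qf 1 * X (0, j) := rfl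
@[simp] lemma wv_3 : wv 3 = fun j => Qf 1 * X (1, j) := rfl
@[simp] lemma wv_4 : wv 4 = fun j => Qf 2 * X (0, j) := rfl
@[simp] lemma wv_5 : wv 5 = fun j => Qf 2 * X (1, j) := rfl

lemma attentionFun_eq (V : Fin 2 → ℝ) (A : Matrix (Fin 2) (Fin 2) ℝ) :
    attentionFun V A =
      (V 0 * A 0 0) • wv 0 + (V 0 * A 0 1) • wv 1 +
      (V 0 * A 1 0 + V 1 * A 0 0) • wv 2 + (V 0 * A 1 1 + V 1 * A 0 1) • wv 3 +
      (V 1 * A 1 0) • wv 4 + (V 1 * A 1 1) • wv 5 := by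
  funext j
  simp only [attentionFun, genMat, wv_0, wv_1, wv_2, wv_3, wv_4, wv_5,
    Qf_0, Qf_1, Qf_2, Matrix.vecMul, Matrix.mul_apply,
    Fin.sum_univ_two, dotProduct, Matrix.transpose_apply, Matrix.map_apply,
    Matrix.of_apply, Pi.add_apply, Pi.smul_apply, MvPolynomial.smul_eq_C_mul,
    _root_.map_mul, _root_.map_add]
  ring

/-- Substitution sending `X (0,0) ↦ 1`, `X (0,1) ↦ t`, `X (1,0) ↦ t³`, `X (1,1) ↦ t⁹`. -/
noncomputable def ψsub : MvPolynomial (Fin 2 × Fin 2) ℝ →ₐ[ℝ] Polynomial ℝ :=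
  MvPolynomial.aeval
    (fun p : Fin 2 × Fin 2 => ![![1, Polynomial.X], ![Polynomial.X ^ 3, Polynomial.X ^ 9]] p.1 p.2)

def ns : Fin 6 → ℕ := ![0, 5, 10, 13, 18, 21]

/-- Coefficient extraction functional. -/
noncomputable def φmap : (Fin 2 → MvPolynomial (Fin 2 × Fin 2) ℝ) →ₗ[ℝ] (Fin 6 → ℝ) :=
  LinearMap.pi fun i =>
    (Polynomial.lcoeff ℝ (ns i)) ∘ₗ ψsub.toLinearMap ∘ₗ LinearMap.proj 0

@[simp] lemma ns_0 (h : 0 < 6) : ns ⟨0, h⟩ = 0 := rfl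
@[simp] lemma ns_1 (h : 1 < 6) : ns ⟨1, h⟩ = 5 := rfl
@[simp] lemma ns_2 (h : 2 < 6) : ns ⟨2, h⟩ = 10 := rfl
@[simp] lemma ns_3 (h : 3 < 6) : ns ⟨3, h⟩ = 13 := rfl
@[simp] lemma ns_4 (h : 4 < 6) : ns ⟨4, h⟩ = 18 := rfl
@[simp] lemma ns_5 (h : 5 < 6) : ns ⟨5, h⟩ = 21 := rfl
@[simp] lemma wv_0' (h : 0 < 6) : wv ⟨0, h⟩ = fun j => Qf 0 * X (0, j) := rfl
@[simp] lemma wv_1' (h : 1 < 6) : wv ⟨1, h⟩ = fun j => Qf 0 * X (1, j) := rfl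
@[simp] lemma wv_2' (h : 2 < 6) : wv ⟨2, h⟩ = fun j => Qf 1 * X (0, j) := rfl
@[simp] lemma wv_3' (h : 3 < 6) : wv ⟨3, h⟩ = fun j => Qf 1 * X (1, j) := rfl
@[simp] lemma wv_4' (h : 4 < 6) : wv ⟨4, h⟩ = fun j => Qf 2 * X (0, j) := rfl
@[simp] lemma wv_5' (h : 5 < 6) : wv ⟨5, h⟩ = fun j => Qf 2 * X (1, j) := rfl

lemma φmap_wv : (φmap ∘ wv) = fun i => Pi.single i 1 := by
  funext i k
  fin_cases i <;> fin_cases k <;>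
  · simp only [Function.comp_apply, φmap, LinearMap.pi_apply, LinearMap.coe_comp,
      LinearMap.proj_apply, AlgHom.toLinearMap_apply, ψsub,
      wv_0, wv_1, wv_2, wv_3, wv_4, wv_5, Qf_0, Qf_1, Qf_2,
      _root_.map_mul, _root_.map_add, MvPolynomial.aeval_X,
      ns_0, ns_1, ns_2, ns_3, ns_4, ns_5,
      wv_0', wv_1', wv_2', wv_3', wv_4', wv_5',
      Matrix.cons_val_zero, Matrix.cons_val_one, Matrix.head_cons, Fin.isValue]
    ring_nf
    norm_num [Pi.single_apply, Fin.ext_iff, Polynomial.coeff_add, Polynomial.coeff_X_pow,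
      Polynomial.coeff_one, Polynomial.coeff_X]

lemma wv_li : LinearIndependent ℝ wv := by
  apply LinearIndependent.of_comp φmap
  rw [show (⇑φmap ∘ wv) = fun i => Pi.single i 1 from φmap_wv]
  have h := (Pi.basisFun ℝ (Fin 6)).linearIndependent
  rwa [show ⇑(Pi.basisFun ℝ (Fin 6)) = fun i => Pi.single i 1 from funext fun i => by simp] at h

/-- The linear span of the neuromanifold of the lightning self-attention mechanism with
`e' = 1` and `e = t = a = 2` is six-dimensional (Section 5.2 of the paper). -/
theorem attention_span_rank_six :
    Module.rank ℝ (Submodule.span ℝ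
      { g : Fin 2 → MvPolynomial (Fin 2 × Fin 2) ℝ |
        ∃ (V : Fin 2 → ℝ) (A : Matrix (Fin 2) (Fin 2) ℝ), g = attentionFun V A }) = 6 := by
  have hspan : Submodule.span ℝ
      { g : Fin 2 → MvPolynomial (Fin 2 × Fin 2) ℝ |
        ∃ (V : Fin 2 → ℝ) (A : Matrix (Fin 2) (Fin 2) ℝ), g = attentionFun V A } =
      Submodule.span ℝ (Set.range wv) := by
    apply le_antisymm
    · rw [Submodule.span_le]
      rintro g ⟨V, A, rfl⟩
      have h : ∀ i : Fin 6, wv i ∈ Submodule.span ℝ (Set.range wv) := fun i =>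
        Submodule.subset_span ⟨i, rfl⟩
      rw [attentionFun_eq]
      exact add_mem (add_mem (add_mem (add_mem (add_mem
        (Submodule.smul_mem _ _ (h 0)) (Submodule.smul_mem _ _ (h 1)))
        (Submodule.smul_mem _ _ (h 2))) (Submodule.smul_mem _ _ (h 3)))
        (Submodule.smul_mem _ _ (h 4))) (Submodule.smul_mem _ _ (h 5))
    · rw [Submodule.span_le]
      rintro g ⟨i, rfl⟩
      apply Submodule.subset_span
      fin_cases i
      · exact ⟨![1, 0], !![1, 0; 0, 0], by rw [attentionFun_eq]; norm_num⟩
      · exact ⟨![1, 0], !![0, 1; 0, 0], by rw [attentionFun_eq]; norm_num⟩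
      · exact ⟨![1, 0], !![0, 0; 1, 0], by rw [attentionFun_eq]; norm_num⟩
      · exact ⟨![1, 0], !![0, 0; 0, 1], by rw [attentionFun_eq]; norm_num⟩
      · exact ⟨![0, 1], !![0, 0; 1, 0], by rw [attentionFun_eq]; norm_num⟩
      · exact ⟨![0, 1], !![0, 0; 0, 1], by rw [attentionFun_eq]; norm_num⟩
  rw [hspan, rank_span wv_li, Cardinal.mk_range_eq wv wv_li.injective,
    Cardinal.mk_fin]
  norm_num
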